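/- If T^n(α) ≠ 0 for all n ≥ 1, then the convergents p_n/q_n of the p-adic continued fraction expansion of α converge to α in ℚ_p; indeed |α − p_n/q_n|_p = p^{−(k_1 + ⋯ + k_{n+1})} for every n ≥ 1. -/

import Mathlib

/-- Theorem 3.5(ii): if `T^n(α) ≠ 0` for all `n`, then the convergents `p_n/q_n` of the
p-adic continued fraction of `α` converge to `α`; indeed
`|α − p_n/q_n|_p = p^{−(k_1 + ⋯ + k_{n+1})}` for `n ≥ 1`, where `k_i = v_p(T^{i-1}(α))`
(here `P (n+1)` is `p_n` and `Q (n+1)` is `q_n`). -/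
theorem stmt_3 (p : ℕ) [Fact p.Prime]
    (t d T : ℚ_[p] → ℚ_[p])
    (ht : ∀ x, x ≠ 0 → ‖x‖ ≤ 1 / p → ‖t x‖ = 1)
    (hd : ∀ x, x ≠ 0 → ‖x‖ ≤ 1 / p → ‖d x‖ = 1)
    (hT : ∀ x, x ≠ 0 → ‖x‖ ≤ 1 / p →
      T x = t x * (p : ℚ_[p]) ^ x.valuation / x - d x)
    (hTmem : ∀ x, x ≠ 0 → ‖x‖ ≤ 1 / p → ‖T x‖ ≤ 1 / p)
    (α : ℚ_[p]) (hα : ‖α‖ ≤ 1 / p) (hα0 : α ≠ 0)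
    (hnz : ∀ n, T^[n] α ≠ 0)
    (P Q : ℕ → ℚ_[p])
    (hP0 : P 0 = 1) (hP1 : P 1 = 0) (hQ0 : Q 0 = 0) (hQ1 : Q 1 = 1)
    (hPrec : ∀ n, P (n + 2) =
      d (T^[n] α) * P (n + 1) + t (T^[n] α) * (p : ℚ_[p]) ^ (T^[n] α).valuation * P n)
    (hQrec : ∀ n, Q (n + 2) =
      d (T^[n] α) * Q (n + 1) + t (T^[n] α) * (p : ℚ_[p]) ^ (T^[n] α).valuation * Q n) :
    Filter.Tendsto (fun n => P (n + 1) / Q (n + 1)) Filter.atTop (nhds α) ∧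
    ∀ n, 1 ≤ n →
      ‖α - P (n + 1) / Q (n + 1)‖ =
        (p : ℝ) ^ (-(∑ i ∈ Finset.range (n + 1), (T^[i] α).valuation)) := by
  have hp1 : (1:ℝ) < p := by exact_mod_cast (Fact.out : p.Prime).one_lt
  have hp0 : (0:ℝ) < p := lt_trans one_pos hp1
  set A : ℕ → ℚ_[p] := fun n => T^[n] α with hA
  have hAsucc : ∀ n, A (n + 1) = T (A n) := fun n => Function.iterate_succ_apply' T n α
  have hAne : ∀ n, A n ≠ 0 := hnz
  have hAnorm : ∀ n, ‖A n‖ ≤ 1 / p := by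
    intro n
    induction n with
    | zero => simpa [hA] using hα
    | succ k ih => rw [hAsucc]; exact hTmem _ (hAne k) ih
  have hval1 : ∀ n, 1 ≤ (A n).valuation := by
    intro n
    have h := hAnorm n
    rw [Padic.norm_eq_zpow_neg_valuation (hAne n)] at h
    have h2 : ((p:ℝ)) ^ (-(A n).valuation) ≤ (p:ℝ) ^ (-1 : ℤ) := by
      rwa [zpow_neg_one, ← one_div]
    have := (zpow_le_zpow_iff_right₀ hp1).mp h2
    omega
  have hAlt1 : ∀ n, ‖A n‖ < 1 := by
    intro n
    refine lt_of_le_of_lt (hAnorm n) ?_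
    rw [div_lt_one hp0]; exact hp1
  -- partial numerators
  set a : ℕ → ℚ_[p] := fun n => t (A n) * (p : ℚ_[p]) ^ (A n).valuation with ha
  have hanorm : ∀ n, ‖a n‖ = (p:ℝ) ^ (-(A n).valuation) := by
    intro n
    rw [ha]
    simp only
    rw [norm_mul, ht _ (hAne n) (hAnorm n), one_mul, Padic.norm_p_zpow]
  -- key algebraic relation
  have hkey : ∀ n, A n * (d (A n) + A (n + 1)) = a n := by
    intro n
    have h := hT (A n) (hAne n) (hAnorm n)
    calc A n * (d (A n) + A (n + 1))
        = A n * (t (A n) * (p : ℚ_[p]) ^ (A n).valuation / A n) := by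
          rw [hAsucc, h]; ring
      _ = a n := by
          rw [mul_div_assoc', mul_comm, mul_div_assoc, div_self (hAne n), mul_one]
  -- norms of d values
  have hdnorm : ∀ n, ‖d (A n)‖ = 1 := fun n => hd _ (hAne n) (hAnorm n)
  -- norm of denominators d + A(n+1)
  have hden : ∀ n, ‖d (A n) + A (n + 1)‖ = 1 := by
    intro n
    rw [Padic.add_eq_max_of_ne (by rw [hdnorm n]; exact (ne_of_lt (hAlt1 (n+1))).symm)]
    rw [hdnorm n]
    exact max_eq_left (le_of_lt (hAlt1 (n+1)))
  -- norms of Q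
  have hQn : ∀ n, ‖Q (n + 1)‖ = 1 ∧ ‖Q n‖ ≤ 1 := by
    intro n
    induction n with
    | zero => constructor <;> simp [hQ0, hQ1]
    | succ k ih =>
      have h2 : ‖Q (k + 2)‖ = 1 := by
        rw [hQrec k]
        have hfirst : ‖d (A k) * Q (k + 1)‖ = 1 := by
          rw [norm_mul, hdnorm k, ih.1, one_mul]
        have hsecond : ‖t (A k) * (p : ℚ_[p]) ^ (A k).valuation * Q k‖ < 1 := by
          rw [norm_mul]
          calc ‖t (A k) * (p : ℚ_[p]) ^ (A k).valuation‖ * ‖Q k‖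
              ≤ ‖a k‖ * 1 := by
                exact mul_le_mul_of_nonneg_left ih.2 (norm_nonneg _)
            _ = (p:ℝ) ^ (-(A k).valuation) := by rw [mul_one, hanorm k]
            _ < 1 := by
                rw [show (1:ℝ) = (p:ℝ) ^ (0:ℤ) by simp]
                exact zpow_lt_zpow_right₀ hp1 (by have := hval1 k; omega)
        rw [Padic.add_eq_max_of_ne (by rw [hfirst]; exact (ne_of_lt hsecond).symm),
          hfirst]
        exact max_eq_left (le_of_lt hsecond)
      exact ⟨h2, le_of_eq ih.1⟩
  -- main identity
  have hmain : ∀ n, α * (Q (n + 1) + A n * Q n) = P (n + 1) + A n * P n := by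
    intro n
    induction n with
    | zero => simp [hP0, hP1, hQ0, hQ1, hA]
    | succ k ih =>
      have hk := hkey k
      have hPr := hPrec k
      have hQr := hQrec k
      have e1 : P (k + 2) = d (A k) * P (k + 1) + a k * P k := hPr
      have e2 : Q (k + 2) = d (A k) * Q (k + 1) + a k * Q k := hQr
      calc α * (Q (k + 2) + A (k + 1) * Q (k + 1))
          = α * ((d (A k) + A (k + 1)) * Q (k + 1) + a k * Q k) := by rw [e2]; ring
        _ = α * ((d (A k) + A (k + 1)) * Q (k + 1) + (A k * (d (A k) + A (k+1))) * Q k) := by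
            rw [hk]
        _ = (d (A k) + A (k + 1)) * (α * (Q (k + 1) + A k * Q k)) := by ring
        _ = (d (A k) + A (k + 1)) * (P (k + 1) + A k * P k) := by rw [ih]
        _ = (d (A k) + A (k + 1)) * P (k + 1) + (A k * (d (A k) + A (k+1))) * P k := by ring
        _ = P (k + 2) + A (k + 1) * P (k + 1) := by rw [hk, e1]; ring
  -- determinant norm
  have hDnorm : ∀ n, ‖P (n + 1) * Q n - P n * Q (n + 1)‖ =
      (p:ℝ) ^ (-(∑ i ∈ Finset.range n, (A i).valuation)) := by
    intro n
    induction n with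
    | zero => simp [hP0, hP1, hQ0, hQ1]
    | succ k ih =>
      have hDrec : P (k + 2) * Q (k + 1) - P (k + 1) * Q (k + 2) =
          -(a k) * (P (k + 1) * Q k - P k * Q (k + 1)) := by
        rw [hPrec k, hQrec k]; ring
      rw [hDrec, norm_mul, norm_neg, hanorm k, ih, ← zpow_add₀ (ne_of_gt hp0),
        Finset.sum_range_succ]
      ring_nf
  -- difference formula
  have hdiffnorm : ∀ n, ‖α - P (n + 1) / Q (n + 1)‖ =
      (p:ℝ) ^ (-(∑ i ∈ Finset.range (n + 1), (A i).valuation)) := by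
    intro n
    have hQ1ne : Q (n + 1) ≠ 0 := by
      intro h; have := (hQn n).1; rw [h] at this; simp at this
    have hdenN : ‖Q (n + 1) + A n * Q n‖ = 1 := by
      have hsmall : ‖A n * Q n‖ < 1 := by
        rw [norm_mul]
        calc ‖A n‖ * ‖Q n‖ ≤ ‖A n‖ * 1 :=
              mul_le_mul_of_nonneg_left (hQn n).2 (norm_nonneg _)
          _ = ‖A n‖ := mul_one _
          _ < 1 := hAlt1 n
      rw [Padic.add_eq_max_of_ne (by rw [(hQn n).1]; exact (ne_of_lt hsmall).symm),
        (hQn n).1]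
      exact max_eq_left (le_of_lt hsmall)
    have hdenne : Q (n + 1) + A n * Q n ≠ 0 := by
      intro h; rw [h] at hdenN; simp at hdenN
    have heq : α - P (n + 1) / Q (n + 1) =
        -(A n) * (P (n + 1) * Q n - P n * Q (n + 1)) /
          ((Q (n + 1) + A n * Q n) * Q (n + 1)) := by
      have hm := hmain n
      field_simp
      linear_combination Q (n + 1) * hm
    rw [heq, norm_div, norm_mul, norm_mul, norm_neg, hdenN, (hQn n).1, one_mul, div_one, Padic.norm_eq_zpow_neg_valuation (hAne n), hDnorm n, ← zpow_add₀ (ne_of_gt hp0),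
      Finset.sum_range_succ]
    congr 1
    ring
  constructor
  · rw [tendsto_iff_norm_sub_tendsto_zero]
    have hb : ∀ n : ℕ, ‖P (n + 1) / Q (n + 1) - α‖ ≤ (1 / p) ^ (n + 1) := by
      intro n
      rw [norm_sub_rev, hdiffnorm n]
      have hsum : (n + 1 : ℤ) ≤ ∑ i ∈ Finset.range (n + 1), (A i).valuation := by
        calc (n + 1 : ℤ) = ∑ i ∈ Finset.range (n + 1), (1:ℤ) := by simp
          _ ≤ _ := Finset.sum_le_sum fun i _ => hval1 i
      calc (p:ℝ) ^ (-(∑ i ∈ Finset.range (n + 1), (A i).valuation))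
          ≤ (p:ℝ) ^ (-(n + 1 : ℤ)) := by
            exact (zpow_le_zpow_iff_right₀ hp1).mpr (by omega)
        _ = (1 / p) ^ (n + 1) := by
            rw [one_div, inv_pow, zpow_neg, ← zpow_natCast (p:ℝ)]
            norm_num
    have h0 : (0:ℝ) ≤ 1 / p := by positivity
    have h1 : (1:ℝ) / p < 1 := by rw [div_lt_one hp0]; exact hp1
    exact squeeze_zero (fun n => norm_nonneg _) hb
      ((tendsto_pow_atTop_nhds_zero_of_lt_one h0 h1).comp (Filter.tendsto_add_atTop_nat 1))
  · intro n _
    exact hdiffnorm n
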